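/- Every P2-admissible curve that starts in the set B₂ remains in B₂: if q = (x,y,z) : [0,T] → ℝ³ is P2-admissible and q(0) ∈ B₂, then q(t) ∈ B₂ for all t ∈ [0,T]. In particular, every P2-admissible curve starting at the origin (0,0,0) stays in B₂ for all time. -/

import Mathlib

open MeasureTheory Set

noncomputable section

set_option maxHeartbeats 1000000


/-- FTC-type inequality for monotone functions. -/
lemma mono_integral_deriv_le {f : ℝ → ℝ} (hf : Monotone f) (hc : Continuous f)
    {a b : ℝ} (hab : a ≤ b) :
    ∫ t in Ioc a b, deriv f t ≤ f b - f a := by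
  set μ := hf.stieltjesFunction.measure with hμ
  have hae : ∀ᵐ t, HasDerivAt f ((μ.rnDeriv volume t).toReal) t := hf.ae_hasDerivAt
  have h1 : ∫ t in Ioc a b, deriv f t = ∫ t in Ioc a b, (μ.rnDeriv volume t).toReal := by
    apply setIntegral_congr_ae measurableSet_Ioc
    filter_upwards [hae] with t ht _
    exact ht.deriv
  have h2 : ∫ t in Ioc a b, (μ.rnDeriv volume t).toReal
      = (∫⁻ t in Ioc a b, μ.rnDeriv volume t).toReal := by
    apply integral_toReal ((μ.measurable_rnDeriv volume).aemeasurable.restrict)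
    exact ae_restrict_of_ae (μ.rnDeriv_lt_top volume)
  have h3 : ∫⁻ t in Ioc a b, μ.rnDeriv volume t ≤ μ (Ioc a b) :=
    Measure.setLIntegral_rnDeriv_le _
  have h4 : μ (Ioc a b) = ENNReal.ofReal (f b - f a) := by
    have hst : ∀ u : ℝ, hf.stieltjesFunction u = f u := fun u => by
      rw [Monotone.stieltjesFunction_eq]
      exact rightLim_eq_of_tendsto
        hc.continuousAt.continuousWithinAt
    rw [hμ, StieltjesFunction.measure_Ioc, hst, hst]
  rw [h1, h2]
  calc (∫⁻ t in Ioc a b, μ.rnDeriv volume t).toReal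
      ≤ (ENNReal.ofReal (f b - f a)).toReal := by
        exact ENNReal.toReal_mono (by simp) (h4 ▸ h3)
    _ ≤ f b - f a := by
        rw [ENNReal.toReal_ofReal (by linarith [hf hab])]

/-- A Lipschitz function on `[0,T]` whose derivative is a.e. nonnegative is monotone there. -/
lemma mono_of_lip_of_ae {T : ℝ} {f : ℝ → ℝ} {K : NNReal} (hf : LipschitzOnWith K f (Icc 0 T))
    (hd : ∀ᵐ t ∂(volume.restrict (Icc 0 T)), HasDerivAt f (deriv f t) t ∧ 0 ≤ deriv f t)
    {s t : ℝ} (hs : s ∈ Icc 0 T) (ht : t ∈ Icc 0 T) (hst : s ≤ t) : f s ≤ f t := by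
  obtain ⟨g, hg, hfg⟩ := hf.extend_real
  -- G is monotone and continuous
  set G : ℝ → ℝ := fun u => (K : ℝ) * u + g u with hG
  have hGlip : LipschitzWith (K + K) G := by
    have h1 : LipschitzWith K (fun u : ℝ => (K : ℝ) * u) := by
      rw [lipschitzWith_iff_dist_le_mul]
      intro a b
      rw [Real.dist_eq, Real.dist_eq, ← mul_sub, abs_mul, abs_of_nonneg K.coe_nonneg]
    exact h1.add hg
  have hGmono : Monotone G := by
    intro u v huv
    have h1 : g u - g v ≤ (K : ℝ) * (v - u) := by
      have h2 := hg.dist_le_mul u v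
      rw [Real.dist_eq, Real.dist_eq, abs_of_nonpos (show u - v ≤ 0 by linarith)] at h2
      have h3 := le_trans (le_abs_self (g u - g v)) h2
      linarith
    simp only [hG]
    linarith
  have hGc : Continuous G := hGlip.continuous
  -- a.e. on Ioc s t, deriv G = K + deriv f ≥ K
  have hsub : Ioc s t ⊆ Icc 0 T := fun u hu => ⟨le_trans hs.1 hu.1.le, le_trans hu.2 ht.2⟩
  have haesub : ∀ᵐ u ∂(volume.restrict (Ioc s t)),
      HasDerivAt f (deriv f u) u ∧ 0 ≤ deriv f u :=
    ae_restrict_of_ae_restrict_of_subset hsub hd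
  have haeIoo : ∀ᵐ u ∂(volume.restrict (Ioc s t)), u ∈ Ioo (0:ℝ) T := by
    have h1 : ∀ᵐ u ∂(volume.restrict (Ioc s t)), u ∈ Ioc s t :=
      ae_restrict_mem measurableSet_Ioc
    have h2 : ∀ᵐ u : ℝ ∂(volume.restrict (Ioc s t)), u ≠ T := by
      refine ae_restrict_of_ae ?_
      have : volume {u : ℝ | ¬ u ≠ T} = 0 := by
        refine measure_mono_null (fun u hu => ?_) (Real.volume_singleton (a := T))
        simpa using hu
      exact this
    filter_upwards [h1, h2] with u hu huT
    exact ⟨lt_of_le_of_lt hs.1 hu.1, lt_of_le_of_ne (le_trans hu.2 ht.2) huT⟩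
  have haeG : ∀ᵐ u ∂(volume.restrict (Ioc s t)), (K : ℝ) ≤ deriv G u := by
    filter_upwards [haesub, haeIoo] with u hu huIoo
    have hnb : Icc (0:ℝ) T ∈ nhds u := Icc_mem_nhds huIoo.1 huIoo.2
    have hfg' : f =ᶠ[nhds u] g := Filter.eventuallyEq_of_mem hnb hfg
    have hgd : HasDerivAt g (deriv f u) u := hu.1.congr_of_eventuallyEq hfg'.symm
    have hGd : HasDerivAt G ((K : ℝ) + deriv f u) u := by
      simpa [Pi.add_def] using ((hasDerivAt_id u).const_mul (K : ℝ)).add hgd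
    rw [hGd.deriv]
    linarith [hu.2]
  -- integrability of deriv G
  have hint : IntegrableOn (deriv G) (Ioc s t) := by
    refine Integrable.mono' (g := fun _ => ((K + K : NNReal) : ℝ))
      (integrableOn_const measure_Ioc_lt_top.ne)
      (measurable_deriv G).aestronglyMeasurable (ae_restrict_of_ae ?_)
    filter_upwards with u
    simpa using norm_deriv_le_of_lipschitz (x₀ := u) hGlip
  -- conclude
  have hlow : (K : ℝ) * (t - s) ≤ ∫ u in Ioc s t, deriv G u := by
    have : ∫ u in Ioc s t, (K : ℝ) ≤ ∫ u in Ioc s t, deriv G u :=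
      integral_mono_ae (integrableOn_const measure_Ioc_lt_top.ne) hint haeG
    rwa [setIntegral_const, measureReal_def, Real.volume_Ioc, smul_eq_mul,
      ENNReal.toReal_ofReal (by linarith), mul_comm] at this
  have hup : ∫ u in Ioc s t, deriv G u ≤ G t - G s := mono_integral_deriv_le hGmono hGc hst
  have := hlow.trans hup
  have hgs : g s = f s := (hfg hs).symm
  have hgt : g t = f t := (hfg ht).symm
  simp only [hG] at this
  rw [hgs, hgt] at this
  linarith

lemma lipOn_of_bound {f : ℝ → ℝ} {s : Set ℝ} {C : ℝ} (hC : 0 ≤ C)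
    (h : ∀ a ∈ s, ∀ b ∈ s, |f a - f b| ≤ C * |a - b|) :
    LipschitzOnWith C.toNNReal f s := by
  rw [lipschitzOnWith_iff_dist_le_mul]
  intro a ha b hb
  rw [Real.dist_eq, Real.dist_eq]
  calc dist (f a) (f b) = |f a - f b| := Real.dist_eq _ _
    _ ≤ C * |a - b| := h a ha b hb
    _ = (C.toNNReal : ℝ) * |a - b| := by rw [Real.coe_toNNReal C hC]

lemma abs_cube_sub {u v M d : ℝ} (hu : |u| ≤ M) (hv : |v| ≤ M) (huv : |u - v| ≤ d) :
    |u^3 - v^3| ≤ 3*M^2*d := by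
  have h1 : u^3 - v^3 = (u-v)*(u^2+u*v+v^2) := by ring
  rw [h1, abs_mul]
  have h2 : |u^2 + u*v + v^2| ≤ 3*M^2 := by
    have h3 := abs_add_three (u^2) (u*v) (v^2)
    have h4 : |u| * |v| ≤ M * M := mul_le_mul hu hv (abs_nonneg v) (le_trans (abs_nonneg u) hu)
    have h5 := abs_mul u v
    nlinarith [sq_abs u, sq_abs v, abs_nonneg (u*v), abs_nonneg u, abs_nonneg v,
      sq_nonneg u, sq_nonneg v, abs_of_nonneg (sq_nonneg u), abs_of_nonneg (sq_nonneg v)]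
  calc |u - v| * |u^2 + u*v + v^2| ≤ d * (3*M^2) :=
        mul_le_mul huv h2 (abs_nonneg _) (le_trans (abs_nonneg _) huv)
    _ = 3*M^2*d := by ring


/-- A curve `(x, y, z) : [0, T] → ℝ³` is admissible for the second flat sub-Lorentzian
problem on the Martinet distribution: it is Lipschitz on `[0, T]` and for a.e.
`t ∈ [0, T]` it is differentiable with `x' ≥ |y'|` and `z' = x² y' / 2`. -/
def P2Admissible (T : ℝ) (x y z : ℝ → ℝ) : Prop :=
  0 ≤ T ∧
  (∃ K : NNReal, LipschitzOnWith K x (Icc 0 T) ∧ LipschitzOnWith K y (Icc 0 T) ∧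
    LipschitzOnWith K z (Icc 0 T)) ∧
  ∀ᵐ t ∂(volume.restrict (Icc 0 T)),
    HasDerivAt x (deriv x t) t ∧ HasDerivAt y (deriv y t) t ∧ HasDerivAt z (deriv z t) t ∧
    |deriv y t| ≤ deriv x t ∧ deriv z t = (x t) ^ 2 * deriv y t / 2

/-- The sub-Lorentzian length of an admissible curve of the second problem. -/
def P2Length (T : ℝ) (x y : ℝ → ℝ) : ℝ :=
  ∫ t in (0:ℝ)..T, Real.sqrt ((deriv x t) ^ 2 - (deriv y t) ^ 2)

/-- `q₁` is reachable from the origin by a P2-admissible curve. -/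
def P2Reaches (q₁ : ℝ × ℝ × ℝ) : Prop :=
  ∃ (T : ℝ) (x y z : ℝ → ℝ), P2Admissible T x y z ∧
    x 0 = 0 ∧ y 0 = 0 ∧ z 0 = 0 ∧ (x T, y T, z T) = q₁

/-- The sub-Lorentzian distance from the origin in the second problem: the supremum
of lengths of P2-admissible curves from the origin to `q₁` (`0` if there are none). -/
def P2dist (q₁ : ℝ × ℝ × ℝ) : ℝ :=
  sSup (insert 0 {l : ℝ | ∃ (T : ℝ) (x y z : ℝ → ℝ), P2Admissible T x y z ∧
    x 0 = 0 ∧ y 0 = 0 ∧ z 0 = 0 ∧ (x T, y T, z T) = q₁ ∧ l = P2Length T x y})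

/-- The candidate attainable set `B₂` of the second problem. -/
def B2 : Set (ℝ × ℝ × ℝ) :=
  {p | |p.2.1| ≤ p.1 ∧ ((p.1 + p.2.1) ^ 3 - 4 * p.1 ^ 3) / 24 ≤ p.2.2 ∧
    p.2.2 ≤ (4 * p.1 ^ 3 - (p.1 - p.2.1) ^ 3) / 24}

/-- Every P2-admissible curve starting in `B₂` remains in `B₂`. -/
theorem B2_invariant (T : ℝ) (x y z : ℝ → ℝ) (h : P2Admissible T x y z)
    (h0 : (x 0, y 0, z 0) ∈ B2) :
    ∀ t ∈ Icc (0:ℝ) T, (x t, y t, z t) ∈ B2 := by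
  obtain ⟨hT, ⟨K, hx, hy, hz⟩, hae⟩ := h
  obtain ⟨h01, h02, h03⟩ := h0
  simp only at h01 h02 h03
  have h0mem : (0:ℝ) ∈ Icc (0:ℝ) T := ⟨le_refl 0, hT⟩
  have hK0 : (0:ℝ) ≤ (K:ℝ) := K.coe_nonneg
  -- Step A : x - y is nondecreasing
  have hA : ∀ t ∈ Icc (0:ℝ) T, x 0 - y 0 ≤ x t - y t := by
    intro t ht
    have hlip : LipschitzOnWith (2*(K:ℝ)).toNNReal (fun u => x u - y u) (Icc 0 T) := by
      apply lipOn_of_bound (by linarith)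
      intro a ha b hb
      have h1 := hx.dist_le_mul a ha b hb
      have h2 := hy.dist_le_mul a ha b hb
      rw [Real.dist_eq, Real.dist_eq] at h1 h2
      have := abs_sub (x a - x b) (y a - y b)
      have e : x a - y a - (x b - y b) = (x a - x b) - (y a - y b) := by ring
      rw [e]
      nlinarith [abs_nonneg (a - b)]
    have hd : ∀ᵐ u ∂(volume.restrict (Icc 0 T)),
        HasDerivAt (fun u => x u - y u) (deriv (fun u => x u - y u) u) u ∧
          0 ≤ deriv (fun u => x u - y u) u := by
      filter_upwards [hae] with u hu
      obtain ⟨hdx, hdy, _, h1, _⟩ := hu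
      have hD : HasDerivAt (fun u => x u - y u) (deriv x u - deriv y u) u := hdx.sub hdy
      rw [hD.deriv]
      exact ⟨hD, by linarith [abs_le.mp h1]⟩
    exact mono_of_lip_of_ae hlip hd h0mem ht ht.1
  -- Step B : x + y is nondecreasing
  have hB : ∀ t ∈ Icc (0:ℝ) T, x 0 + y 0 ≤ x t + y t := by
    intro t ht
    have hlip : LipschitzOnWith (2*(K:ℝ)).toNNReal (fun u => x u + y u) (Icc 0 T) := by
      apply lipOn_of_bound (by linarith)
      intro a ha b hb
      have h1 := hx.dist_le_mul a ha b hb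
      have h2 := hy.dist_le_mul a ha b hb
      rw [Real.dist_eq, Real.dist_eq] at h1 h2
      have := abs_add_le (x a - x b) (y a - y b)
      have e : x a + y a - (x b + y b) = (x a - x b) + (y a - y b) := by ring
      rw [e]
      nlinarith [abs_nonneg (a - b)]
    have hd : ∀ᵐ u ∂(volume.restrict (Icc 0 T)),
        HasDerivAt (fun u => x u + y u) (deriv (fun u => x u + y u) u) u ∧
          0 ≤ deriv (fun u => x u + y u) u := by
      filter_upwards [hae] with u hu
      obtain ⟨hdx, hdy, _, h1, _⟩ := hu
      have hD : HasDerivAt (fun u => x u + y u) (deriv x u + deriv y u) u := hdx.add hdy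
      rw [hD.deriv]
      exact ⟨hD, by linarith [abs_le.mp h1]⟩
    exact mono_of_lip_of_ae hlip hd h0mem ht ht.1
  -- |y t| ≤ x t on [0,T]
  have hxy : ∀ t ∈ Icc (0:ℝ) T, |y t| ≤ x t := by
    intro t ht
    have h1 := hA t ht
    have h2 := hB t ht
    have h3 := abs_le.mp h01
    rw [abs_le]
    constructor <;> linarith
  -- bounds on x, y
  obtain ⟨M, hM0, hxb, hyb⟩ : ∃ M : ℝ, 0 ≤ M ∧ (∀ t ∈ Icc (0:ℝ) T, |x t| ≤ M) ∧
      (∀ t ∈ Icc (0:ℝ) T, |y t| ≤ M) := by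
    refine ⟨|x 0| + |y 0| + (K:ℝ) * T, by positivity, ?_, ?_⟩
    · intro t ht
      have h1 := hx.dist_le_mul t ht 0 h0mem
      rw [Real.dist_eq, Real.dist_eq, sub_zero, abs_of_nonneg ht.1] at h1
      have h2 := abs_sub_abs_le_abs_sub (x t) (x 0)
      have h3 : (K:ℝ) * t ≤ (K:ℝ) * T := by nlinarith [ht.2]
      have h4 := abs_nonneg (y 0)
      linarith
    · intro t ht
      have h1 := hy.dist_le_mul t ht 0 h0mem
      rw [Real.dist_eq, Real.dist_eq, sub_zero, abs_of_nonneg ht.1] at h1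
      have h2 := abs_sub_abs_le_abs_sub (y t) (y 0)
      have h3 : (K:ℝ) * t ≤ (K:ℝ) * T := by nlinarith [ht.2]
      have h4 := abs_nonneg (x 0)
      linarith
  -- Step C : the lower bound function is nondecreasing
  set F : ℝ → ℝ := fun u => z u - ((x u + y u)^3 - 4*(x u)^3)/24 with hF
  have hC : ∀ t ∈ Icc (0:ℝ) T, F 0 ≤ F t := by
    intro t ht
    have hlip : LipschitzOnWith ((K:ℝ)*(1 + 2*M^2)).toNNReal F (Icc 0 T) := by
      apply lipOn_of_bound (by positivity)
      intro a ha b hb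
      have hza := hz.dist_le_mul a ha b hb
      rw [Real.dist_eq, Real.dist_eq] at hza
      have hxab : |x a - x b| ≤ (K:ℝ) * |a - b| := by
        have := hx.dist_le_mul a ha b hb; rwa [Real.dist_eq, Real.dist_eq] at this
      have hyab : |y a - y b| ≤ (K:ℝ) * |a - b| := by
        have := hy.dist_le_mul a ha b hb; rwa [Real.dist_eq, Real.dist_eq] at this
      have hXa : |x a + y a| ≤ 2*M := by
        have := abs_add_le (x a) (y a); linarith [hxb a ha, hyb a ha]
      have hXb : |x b + y b| ≤ 2*M := by
        have := abs_add_le (x b) (y b); linarith [hxb b hb, hyb b hb]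
      have hXab : |(x a + y a) - (x b + y b)| ≤ 2*(K:ℝ)*|a - b| := by
        have e : (x a + y a) - (x b + y b) = (x a - x b) + (y a - y b) := by ring
        rw [e]
        have := abs_add_le (x a - x b) (y a - y b)
        linarith
      have c1 : |(x a + y a)^3 - (x b + y b)^3| ≤ 3*(2*M)^2*(2*(K:ℝ)*|a - b|) :=
        abs_cube_sub hXa hXb hXab
      have c2 : |(x a)^3 - (x b)^3| ≤ 3*M^2*((K:ℝ)*|a - b|) :=
        abs_cube_sub (hxb a ha) (hxb b hb) hxab
      have e : F a - F b = (z a - z b)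
          - (((x a + y a)^3 - (x b + y b)^3) - 4*((x a)^3 - (x b)^3))/24 := by
        simp only [hF]; ring
      rw [e]
      have h5 := abs_sub (z a - z b)
        ((((x a + y a)^3 - (x b + y b)^3) - 4*((x a)^3 - (x b)^3))/24)
      have h6 := abs_sub ((x a + y a)^3 - (x b + y b)^3) (4*((x a)^3 - (x b)^3))
      have h7 : |(4:ℝ)*((x a)^3 - (x b)^3)| = 4*|(x a)^3 - (x b)^3| := by
        rw [abs_mul]; norm_num
      rw [abs_div] at h5
      have h8 : |(24:ℝ)| = 24 := by norm_num
      rw [h8] at h5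
      rw [h7] at h6
      linarith [mul_nonneg (mul_nonneg hK0 (sq_nonneg M)) (abs_nonneg (a - b)),
        h5, h6, c1, c2, hza]
    have hd : ∀ᵐ u ∂(volume.restrict (Icc 0 T)),
        HasDerivAt F (deriv F u) u ∧ 0 ≤ deriv F u := by
      filter_upwards [hae, ae_restrict_mem measurableSet_Icc] with u hu humem
      obtain ⟨hdx, hdy, hdz, h1, h2⟩ := hu
      have hXd : HasDerivAt (fun u => x u + y u) (deriv x u + deriv y u) u := hdx.add hdy
      have hX3 : HasDerivAt (fun u => (x u + y u)^3)
          (3*(x u + y u)^2*(deriv x u + deriv y u)) u := by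
        simpa [Pi.pow_def] using hXd.pow 3
      have hx3 : HasDerivAt (fun u => (x u)^3) (3*(x u)^2*(deriv x u)) u := by
        simpa [Pi.pow_def] using hdx.pow 3
      have hD : HasDerivAt F (deriv z u
          - (3*(x u + y u)^2*(deriv x u + deriv y u) - 4*(3*(x u)^2*(deriv x u)))/24) u :=
        hdz.sub ((hX3.sub (hx3.const_mul 4)).div_const 24)
      rw [hD.deriv]
      refine ⟨hD, ?_⟩
      have h3 := abs_le.mp h1
      have h4 := abs_le.mp (hxy u humem)
      rw [h2]
      nlinarith [mul_nonneg (mul_nonneg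
        (show (0:ℝ) ≤ deriv x u + deriv y u by linarith)
        (show (0:ℝ) ≤ x u - y u by linarith))
        (show (0:ℝ) ≤ 3*(x u) + y u by linarith)]
    exact mono_of_lip_of_ae hlip hd h0mem ht ht.1
  -- Step D : the upper bound function is nondecreasing
  set G : ℝ → ℝ := fun u => (4*(x u)^3 - (x u - y u)^3)/24 - z u with hG
  have hD2 : ∀ t ∈ Icc (0:ℝ) T, G 0 ≤ G t := by
    intro t ht
    have hlip : LipschitzOnWith ((K:ℝ)*(1 + 2*M^2)).toNNReal G (Icc 0 T) := by
      apply lipOn_of_bound (by positivity)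
      intro a ha b hb
      have hza := hz.dist_le_mul a ha b hb
      rw [Real.dist_eq, Real.dist_eq] at hza
      have hxab : |x a - x b| ≤ (K:ℝ) * |a - b| := by
        have := hx.dist_le_mul a ha b hb; rwa [Real.dist_eq, Real.dist_eq] at this
      have hyab : |y a - y b| ≤ (K:ℝ) * |a - b| := by
        have := hy.dist_le_mul a ha b hb; rwa [Real.dist_eq, Real.dist_eq] at this
      have hXa : |x a - y a| ≤ 2*M := by
        have := abs_sub (x a) (y a); linarith [hxb a ha, hyb a ha]
      have hXb : |x b - y b| ≤ 2*M := by
        have := abs_sub (x b) (y b); linarith [hxb b hb, hyb b hb]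
      have hXab : |(x a - y a) - (x b - y b)| ≤ 2*(K:ℝ)*|a - b| := by
        have e : (x a - y a) - (x b - y b) = (x a - x b) - (y a - y b) := by ring
        rw [e]
        have := abs_sub (x a - x b) (y a - y b)
        linarith
      have c1 : |(x a - y a)^3 - (x b - y b)^3| ≤ 3*(2*M)^2*(2*(K:ℝ)*|a - b|) :=
        abs_cube_sub hXa hXb hXab
      have c2 : |(x a)^3 - (x b)^3| ≤ 3*M^2*((K:ℝ)*|a - b|) :=
        abs_cube_sub (hxb a ha) (hxb b hb) hxab
      have e : G a - G b = (4*((x a)^3 - (x b)^3) - ((x a - y a)^3 - (x b - y b)^3))/24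
          - (z a - z b) := by
        simp only [hG]; ring
      rw [e]
      have h5 := abs_sub ((4*((x a)^3 - (x b)^3) - ((x a - y a)^3 - (x b - y b)^3))/24)
        (z a - z b)
      have h6 := abs_sub (4*((x a)^3 - (x b)^3)) ((x a - y a)^3 - (x b - y b)^3)
      have h7 : |(4:ℝ)*((x a)^3 - (x b)^3)| = 4*|(x a)^3 - (x b)^3| := by
        rw [abs_mul]; norm_num
      rw [abs_div] at h5
      have h8 : |(24:ℝ)| = 24 := by norm_num
      rw [h8] at h5
      rw [h7] at h6
      linarith [mul_nonneg (mul_nonneg hK0 (sq_nonneg M)) (abs_nonneg (a - b)),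
        h5, h6, c1, c2, hza]
    have hd : ∀ᵐ u ∂(volume.restrict (Icc 0 T)),
        HasDerivAt G (deriv G u) u ∧ 0 ≤ deriv G u := by
      filter_upwards [hae, ae_restrict_mem measurableSet_Icc] with u hu humem
      obtain ⟨hdx, hdy, hdz, h1, h2⟩ := hu
      have hXd : HasDerivAt (fun u => x u - y u) (deriv x u - deriv y u) u := hdx.sub hdy
      have hX3 : HasDerivAt (fun u => (x u - y u)^3)
          (3*(x u - y u)^2*(deriv x u - deriv y u)) u := by
        simpa [Pi.pow_def] using hXd.pow 3
      have hx3 : HasDerivAt (fun u => (x u)^3) (3*(x u)^2*(deriv x u)) u := by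
        simpa [Pi.pow_def] using hdx.pow 3
      have hD : HasDerivAt G
          ((4*(3*(x u)^2*(deriv x u)) - 3*(x u - y u)^2*(deriv x u - deriv y u))/24
            - deriv z u) u :=
        (((hx3.const_mul 4).sub hX3).div_const 24).sub hdz
      rw [hD.deriv]
      refine ⟨hD, ?_⟩
      have h3 := abs_le.mp h1
      have h4 := abs_le.mp (hxy u humem)
      rw [h2]
      nlinarith [mul_nonneg (mul_nonneg
        (show (0:ℝ) ≤ deriv x u - deriv y u by linarith)
        (show (0:ℝ) ≤ x u + y u by linarith))
        (show (0:ℝ) ≤ 3*(x u) - y u by linarith)]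
    exact mono_of_lip_of_ae hlip hd h0mem ht ht.1
  -- conclusion
  intro t ht
  refine ⟨hxy t ht, ?_, ?_⟩
  · have h1 := hC t ht
    simp only [hF] at h1
    linarith
  · have h1 := hD2 t ht
    simp only [hG] at h1
    linarith
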